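/- Under hypotheses (H1)–(H4), one has |K Δ C| = ∫_ℝ |g(x)^{n−1} − s(x)^{n−1}| dx, where Δ denotes symmetric difference and g, s are extended by 0 outside their original domains. -/

import Mathlib

open MeasureTheory Set

private lemma toReal_symmDiff_subset {α : Type*} [MeasurableSpace α] {μ : Measure α} {A B : Set α}
    (hB : MeasurableSet B) (hAf : μ A ≠ ⊤) (hBf : μ B ≠ ⊤) (h : B ⊆ A) :
    (μ (symmDiff A B)).toReal = |(μ A).toReal - (μ B).toReal| := by
  rw [symmDiff_of_ge h, measure_diff h hB.nullMeasurableSet hBf,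
    ENNReal.toReal_sub_of_le (measure_mono h) hAf,
    abs_of_nonneg (sub_nonneg.mpr (ENNReal.toReal_mono hAf (measure_mono h)))]

private lemma toReal_symmDiff_nested {α : Type*} [MeasurableSpace α] {μ : Measure α} {A B : Set α}
    (hA : MeasurableSet A) (hB : MeasurableSet B) (hAf : μ A ≠ ⊤) (hBf : μ B ≠ ⊤)
    (h : B ⊆ A ∨ A ⊆ B) :
    (μ (symmDiff A B)).toReal = |(μ A).toReal - (μ B).toReal| := by
  rcases h with h | h
  · exact toReal_symmDiff_subset hB hAf hBf h
  · rw [symmDiff_comm, abs_sub_comm]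
    exact toReal_symmDiff_subset hA hBf hAf h

set_option maxHeartbeats 2000000 in
theorem symmDiff_eq_integral (n : ℕ) (hn : 2 ≤ n)
    (K : Set (ℝ × EuclideanSpace ℝ (Fin (n - 1))))
    (hKcomp : IsCompact K) (hKconv : Convex ℝ K)
    -- (H1): the centroid of K is the origin
    (hH1 : (∫ p in K, p) = 0)
    -- (H3): max_x |K_x| = 1
    (hH3le : ∀ x : ℝ, volume {y : EuclideanSpace ℝ (Fin (n - 1)) | (x, y) ∈ K} ≤ 1)
    (hH3eq : ∃ x : ℝ, volume {y : EuclideanSpace ℝ (Fin (n - 1)) | (x, y) ∈ K} = 1)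
    -- (H4): |K| = 1
    (hH4 : volume K = 1)
    (a b : ℝ)
    (ha : IsLeast (Prod.fst '' K) a) (hb : IsGreatest (Prod.fst '' K) b)
    (a' b' : ℝ)
    (hb' : b' = ((n:ℝ) / (volume {y : EuclideanSpace ℝ (Fin (n - 1)) | ((0:ℝ), y) ∈ K}).toReal)
            * (volume (K ∩ {p : ℝ × EuclideanSpace ℝ (Fin (n - 1)) | 0 ≤ p.1})).toReal)
    (ha' : a' = b' - (((n:ℝ) * b' ^ (n - 1))
            / (volume {y : EuclideanSpace ℝ (Fin (n - 1)) | ((0:ℝ), y) ∈ K}).toReal)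
              ^ ((n:ℝ)⁻¹))
    (β : EuclideanSpace ℝ (Fin (n - 1))) (hβ : (b, β) ∈ K)
    (C : Set (ℝ × EuclideanSpace ℝ (Fin (n - 1))))
    (hC : C = convexHull ℝ
      ((({a'} : Set ℝ) ×ˢ
          ((fun y => β + ((b - a') / b) • (y - β)) ''
            {y : EuclideanSpace ℝ (Fin (n - 1)) | ((0:ℝ), y) ∈ K}))
        ∪ {(b, β)}))
    (g : ℝ → ℝ)
    (hg : ∀ x, g x = (volume {y : EuclideanSpace ℝ (Fin (n - 1)) | (x, y) ∈ K}).toReal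
              ^ (((n:ℝ) - 1)⁻¹))
    (s : ℝ → ℝ)
    (hs : ∀ x, s x = (volume {y : EuclideanSpace ℝ (Fin (n - 1)) | (x, y) ∈ C}).toReal
              ^ (((n:ℝ) - 1)⁻¹))
    :
    (volume (symmDiff K C)).toReal = ∫ x, |g x ^ (n - 1) - s x ^ (n - 1)| := by
  classical
  have hKm : MeasurableSet K := hKcomp.isClosed.measurableSet
  have hn1 : (1:ℕ) ≤ n := le_trans one_le_two hn
  -- the first-coordinate integral over K vanishes
  have hintK : IntegrableOn (fun p : ℝ × EuclideanSpace ℝ (Fin (n-1)) => p) K volume :=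
    ContinuousOn.integrableOn_compact hKcomp continuousOn_id
  have hfst : ∫ p in K, p.1 = 0 := by
    have h1 := (ContinuousLinearMap.fst ℝ ℝ (EuclideanSpace ℝ (Fin (n-1)))).integral_comp_comm hintK
    rw [hH1] at h1
    simpa using h1
  -- K cannot lie (weakly) on one side of the hyperplane
  have hKnull : ∀ c : ℝ, c ≠ 0 → (∀ p ∈ K, 0 ≤ c * p.1) → False := by
    intro c hc hpos
    have hintc : Integrable (fun p : ℝ × EuclideanSpace ℝ (Fin (n-1)) => c * p.1)
        (volume.restrict K) :=
      ContinuousOn.integrableOn_compact hKcomp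
        ((continuous_const.mul continuous_fst).continuousOn)
    have hI : ∫ p in K, c * p.1 = 0 := by
      rw [integral_const_mul, hfst, mul_zero]
    have hnn : 0 ≤ᶠ[ae (volume.restrict K)] fun p : ℝ × EuclideanSpace ℝ (Fin (n-1)) => c * p.1 :=
      (ae_restrict_mem hKm).mono fun p hp => hpos p hp
    have hae0 := (integral_eq_zero_iff_of_nonneg_ae hnn hintc).mp hI
    have hae1 : ∀ᵐ p ∂(volume.restrict K), p.1 = 0 := by
      refine hae0.mono fun p hp => ?_
      have hcp : c * p.1 = 0 := hp
      exact (mul_eq_zero.mp hcp).resolve_left hc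
    have hne : (volume.restrict K) {p : ℝ × EuclideanSpace ℝ (Fin (n-1)) | ¬ p.1 = 0} = 0 := by
      simpa [ae_iff] using hae1
    have hm0 : MeasurableSet {p : ℝ × EuclideanSpace ℝ (Fin (n-1)) | p.1 = 0} :=
      measurable_fst (measurableSet_singleton (0:ℝ))
    have hnull0 : volume {p : ℝ × EuclideanSpace ℝ (Fin (n-1)) | p.1 = 0} = 0 := by
      have hset : {p : ℝ × EuclideanSpace ℝ (Fin (n-1)) | p.1 = 0}
          = ({(0:ℝ)} : Set ℝ) ×ˢ (univ : Set (EuclideanSpace ℝ (Fin (n-1)))) := by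
        ext p
        simp only [mem_setOf_eq, Set.mem_prod, mem_singleton_iff, mem_univ, and_true]
      rw [hset, Measure.volume_eq_prod, Measure.prod_prod]
      simp
    have hle : volume K ≤ 0 := by
      calc volume K = (volume.restrict K) univ := (Measure.restrict_apply_univ K).symm
        _ = (volume.restrict K) ({p : ℝ × EuclideanSpace ℝ (Fin (n-1)) | p.1 = 0}
              ∪ {p : ℝ × EuclideanSpace ℝ (Fin (n-1)) | ¬ p.1 = 0}) := by
            congr 1
            ext p
            by_cases h : p.1 = 0 <;> simp [h]
        _ ≤ (volume.restrict K) {p : ℝ × EuclideanSpace ℝ (Fin (n-1)) | p.1 = 0}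
              + (volume.restrict K) {p : ℝ × EuclideanSpace ℝ (Fin (n-1)) | ¬ p.1 = 0} :=
            measure_union_le _ _
        _ ≤ volume {p : ℝ × EuclideanSpace ℝ (Fin (n-1)) | p.1 = 0} + 0 := by
            refine add_le_add ?_ (le_of_eq hne)
            rw [Measure.restrict_apply hm0]
            exact measure_mono inter_subset_left
        _ = 0 := by rw [hnull0, add_zero]
    rw [hH4] at hle
    exact (by norm_num : ¬ ((1:ENNReal) ≤ 0)) hle
  have hbpos : (0:ℝ) < b := by
    by_contra hb0
    push_neg at hb0
    refine hKnull (-1) (by norm_num) fun p hp => ?_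
    have hpb : p.1 ≤ b := hb.2 ⟨p, hp, rfl⟩
    nlinarith
  have haneg : a < 0 := by
    by_contra ha0
    push_neg at ha0
    refine hKnull 1 one_ne_zero fun p hp => ?_
    have hpa : a ≤ p.1 := ha.2 ⟨p, hp, rfl⟩
    nlinarith
  set K0 : Set (EuclideanSpace ℝ (Fin (n-1))) :=
    {y : EuclideanSpace ℝ (Fin (n - 1)) | ((0:ℝ), y) ∈ K} with hK0def
  obtain ⟨pa, hpaK, hpa1⟩ := ha.1
  have hK0ne : K0.Nonempty := by
    have hba : (0:ℝ) < b - a := by linarith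
    set t : ℝ := b / (b - a) with ht
    have ht0 : 0 ≤ t := le_of_lt (div_pos hbpos hba)
    have ht1 : t ≤ 1 := by rw [ht, div_le_one hba]; linarith
    refine ⟨t • pa.2 + (1 - t) • β, ?_⟩
    have hmem := hKconv hpaK hβ ht0 (show (0:ℝ) ≤ 1 - t by linarith)
      (show t + (1 - t) = 1 by ring)
    have heq : t • pa + (1 - t) • ((b, β) : ℝ × EuclideanSpace ℝ (Fin (n-1)))
        = ((0:ℝ), t • pa.2 + (1 - t) • β) := by
      refine Prod.ext ?_ rfl
      show t • pa.1 + (1 - t) • b = 0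
      rw [smul_eq_mul, smul_eq_mul, hpa1, ht]
      field_simp
      ring
    rw [heq] at hmem
    exact hmem
  set r : ℝ := (b - a') / b with hrdef
  set f : EuclideanSpace ℝ (Fin (n-1)) → EuclideanSpace ℝ (Fin (n-1)) :=
    fun y => β + r • (y - β) with hfdef
  set Base : Set (ℝ × EuclideanSpace ℝ (Fin (n-1))) := ({a'} : Set ℝ) ×ˢ (f '' K0) with hBase
  have hK0conv : Convex ℝ K0 := by
    intro y1 h1 y2 h2 t u ht hu htu
    have hmem := hKconv h1 h2 ht hu htu
    have heq : t • (((0:ℝ), y1) : ℝ × EuclideanSpace ℝ (Fin (n-1))) + u • ((0:ℝ), y2)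
        = ((0:ℝ), t • y1 + u • y2) := by
      refine Prod.ext ?_ rfl
      show t • (0:ℝ) + u • (0:ℝ) = 0
      simp
    rw [heq] at hmem
    exact hmem
  have himgconv : Convex ℝ (f '' K0) := by
    rintro _ ⟨y1, h1, rfl⟩ _ ⟨y2, h2, rfl⟩ t u ht hu htu
    refine ⟨t • y1 + u • y2, hK0conv h1 h2 ht hu htu, ?_⟩
    show β + r • (t • y1 + u • y2 - β) = t • (β + r • (y1 - β)) + u • (β + r • (y2 - β))
    have hu' : u = 1 - t := by linarith
    subst hu'
    module
  have hK0cpt : IsCompact K0 := by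
    have hcl : IsClosed K0 :=
      hKcomp.isClosed.preimage (continuous_const.prodMk continuous_id :
        Continuous fun y : EuclideanSpace ℝ (Fin (n-1)) => ((0:ℝ), y))
    exact IsCompact.of_isClosed_subset (hKcomp.image continuous_snd) hcl
      (fun y hy => ⟨((0:ℝ), y), hy, rfl⟩)
  have hfcont : Continuous f := by fun_prop
  have hBasecpt : IsCompact Base := isCompact_singleton.prod (hK0cpt.image hfcont)
  have hBaseconv : Convex ℝ Base := (convex_singleton a').prod himgconv
  have hBasene : Base.Nonempty :=
    ⟨(a', f hK0ne.choose), mk_mem_prod rfl ⟨_, hK0ne.choose_spec, rfl⟩⟩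
  have hCeq : C = convexJoin ℝ {((b, β) : ℝ × EuclideanSpace ℝ (Fin (n-1)))} Base := by
    rw [hC, union_singleton, convexHull_insert hBasene, hBaseconv.convexHull_eq]
  have hCcpt : IsCompact C := by
    have himg : C = (fun q : ℝ × (ℝ × EuclideanSpace ℝ (Fin (n-1))) =>
        (1 - q.1) • ((b, β) : ℝ × EuclideanSpace ℝ (Fin (n-1))) + q.1 • q.2) ''
        (Icc (0:ℝ) 1 ×ˢ Base) := by
      rw [hCeq]
      ext q
      constructor
      · intro hq
        rw [mem_convexJoin] at hq
        obtain ⟨sS, hsS, p, hp, hseg⟩ := hq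
        rw [mem_singleton_iff] at hsS
        subst hsS
        rw [segment_eq_image] at hseg
        obtain ⟨θ, hθ, hqe⟩ := hseg
        exact ⟨(θ, p), mk_mem_prod hθ hp, hqe⟩
      · rintro ⟨⟨θ, p⟩, hmem, rfl⟩
        rw [mem_prod] at hmem
        rw [mem_convexJoin]
        exact ⟨_, rfl, p, hmem.2, by rw [segment_eq_image]; exact ⟨θ, hmem.1, rfl⟩⟩
    rw [himg]
    exact (isCompact_Icc.prod hBasecpt).image (by fun_prop)
  have hCm : MeasurableSet C := hCcpt.isClosed.measurableSet
  have hCconv : Convex ℝ C := by rw [hC]; exact convex_convexHull ℝ _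
  -- representation of points of C
  have hCrep : ∀ q ∈ C, ∃ y0 ∈ K0, ∃ t : ℝ, 0 ≤ t ∧ t ≤ 1 ∧
      q = (1 - t) • ((b, β) : ℝ × EuclideanSpace ℝ (Fin (n-1))) + t • ((a', f y0)) := by
    intro q hq
    rw [hCeq, mem_convexJoin] at hq
    obtain ⟨sS, hsS, p, hp, hseg⟩ := hq
    rw [mem_singleton_iff] at hsS
    subst hsS
    rw [hBase, mem_prod, mem_singleton_iff] at hp
    obtain ⟨y0, hy0, hfy⟩ := hp.2
    have hpe : p = (a', f y0) := Prod.ext hp.1 hfy.symm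
    rw [segment_eq_image] at hseg
    obtain ⟨t, htmem, hqe⟩ := hseg
    exact ⟨y0, hy0, t, htmem.1, htmem.2, by rw [← hqe, hpe]⟩
  have hslab : ∀ q ∈ C, min a' b ≤ q.1 ∧ q.1 ≤ max a' b := by
    intro q hq
    obtain ⟨y0, hy0, t, ht0, ht1, hqe⟩ := hCrep q hq
    have hq1 : q.1 = (1 - t) * b + t * a' := by
      rw [hqe]; simp [Prod.fst_add, Prod.smul_fst, smul_eq_mul]
    constructor
    · rw [hq1]
      nlinarith [min_le_left a' b, min_le_right a' b]
    · rw [hq1]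
      nlinarith [le_max_left a' b, le_max_right a' b]
  -- for 0 ≤ x ≤ b, the slice of C is inside the slice of K
  have hCtoK : ∀ x y, 0 ≤ x → x ≤ b → (x, y) ∈ C → (x, y) ∈ K := by
    intro x y hx0 hxb hmem
    obtain ⟨y0, hy0, t, ht0, ht1, hqe⟩ := hCrep _ hmem
    rw [Prod.ext_iff] at hqe
    obtain ⟨h1, h2⟩ := hqe
    simp only [Prod.fst_add, Prod.smul_fst, Prod.snd_add, Prod.smul_snd, smul_eq_mul] at h1 h2
    set c : ℝ := (b - x) / b with hcdef
    have hc0 : 0 ≤ c := div_nonneg (by linarith) hbpos.le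
    have hc1 : c ≤ 1 := by rw [hcdef, div_le_one hbpos]; linarith
    have hctr : c = t * r := by
      rw [hcdef, hrdef, h1]
      field_simp
      ring
    have hy : y = (1 - c) • β + c • y0 := by
      rw [h2, hctr]
      simp only [hfdef]
      module
    have hmemK := hKconv hβ (show ((0:ℝ), y0) ∈ K from hy0)
      (show (0:ℝ) ≤ 1 - c by linarith) hc0 (show (1 - c) + c = 1 by ring)
    have heq : (1 - c) • ((b, β) : ℝ × EuclideanSpace ℝ (Fin (n-1))) + c • ((0:ℝ), y0)
        = (x, y) := by
      refine Prod.ext ?_ ?_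
      · show (1 - c) • b + c • (0:ℝ) = x
        rw [smul_eq_mul, smul_eq_mul, hcdef]
        field_simp
        ring
      · show (1 - c) • β + c • y0 = y
        rw [hy]
    rw [heq] at hmemK
    exact hmemK
  -- for a' ≤ x ≤ 0, the slice of K is inside the slice of C
  have hKtoC : ∀ x y, a' ≤ x → x ≤ 0 → (x, y) ∈ K → (x, y) ∈ C := by
    intro x y hax hx0 hmem
    have hbx : (0:ℝ) < b - x := by linarith
    have hba' : (0:ℝ) < b - a' := by linarith
    set τ : ℝ := b / (b - x) with hτ
    have hτ0 : 0 ≤ τ := le_of_lt (div_pos hbpos hbx)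
    have hτ1 : τ ≤ 1 := by rw [hτ, div_le_one hbx]; linarith
    set z := τ • y + (1 - τ) • β with hz
    have hzK0 : z ∈ K0 := by
      have hmemz := hKconv hmem hβ hτ0 (show (0:ℝ) ≤ 1 - τ by linarith)
        (show τ + (1 - τ) = 1 by ring)
      have heq : τ • ((x, y) : ℝ × EuclideanSpace ℝ (Fin (n-1))) + (1 - τ) • ((b, β)) = ((0:ℝ), z) := by
        refine Prod.ext ?_ rfl
        show τ • x + (1 - τ) • b = 0
        rw [smul_eq_mul, smul_eq_mul, hτ]
        field_simp
        ring
      rw [heq] at hmemz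
      exact hmemz
    set u : ℝ := (x - a') / (b - a') with hu
    have hu0 : 0 ≤ u := div_nonneg (by linarith) hba'.le
    have hu1 : u ≤ 1 := by rw [hu, div_le_one hba']; linarith
    have hSC : ((b, β) : ℝ × EuclideanSpace ℝ (Fin (n-1))) ∈ C := by
      rw [hC]
      exact subset_convexHull ℝ _ (mem_union_right _ rfl)
    have hpC : ((a', f z) : ℝ × EuclideanSpace ℝ (Fin (n-1))) ∈ C := by
      rw [hC]
      exact subset_convexHull ℝ _ (mem_union_left _ (mk_mem_prod rfl ⟨z, hzK0, rfl⟩))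
    have hmemC := hCconv hSC hpC hu0 (show (0:ℝ) ≤ 1 - u by linarith)
      (show u + (1 - u) = 1 by ring)
    have heq : u • ((b, β) : ℝ × EuclideanSpace ℝ (Fin (n-1))) + (1 - u) • ((a', f z)) = (x, y) := by
      refine Prod.ext ?_ ?_
      · show u • b + (1 - u) • a' = x
        rw [smul_eq_mul, smul_eq_mul, hu]
        field_simp
        ring
      · show u • β + (1 - u) • (f z) = y
        simp only [hfdef, hz]
        have hscal : (1 - u) * r * τ = 1 := by
          rw [hu, hrdef, hτ]
          field_simp
          ring
        have hexp : u • β + (1 - u) • (β + r • ((τ • y + (1 - τ) • β) - β))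
            = β + ((1 - u) * r * τ) • (y - β) := by module
        rw [hexp, hscal, one_smul]
        abel
    rw [heq] at hmemC
    exact hmemC
  -- nesting of slices
  have hnest : ∀ x : ℝ, (Prod.mk x ⁻¹' C ⊆ Prod.mk x ⁻¹' K) ∨
      (Prod.mk x ⁻¹' K ⊆ Prod.mk x ⁻¹' C) := by
    intro x
    rcases le_or_gt 0 x with hx0 | hx0
    · rcases le_or_gt x b with hxb | hxb
      · exact Or.inl fun y hy => hCtoK x y hx0 hxb hy
      · exact Or.inr fun y hy =>
          ((not_le.mpr hxb) (hb.2 ⟨(x, y), hy, rfl⟩)).elim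
    · rcases le_or_gt a' x with hax | hax
      · exact Or.inr fun y hy => hKtoC x y hax hx0.le hy
      · refine Or.inl fun y hy => ?_
        have h := (hslab _ hy).1
        exact ((not_le.mpr (lt_min hax (hx0.trans hbpos))) h).elim
  -- measure-theoretic part
  have hsliceKfin : ∀ x : ℝ, volume (Prod.mk x ⁻¹' K) ≠ ⊤ := by
    intro x
    have hsub : Prod.mk x ⁻¹' K ⊆ Prod.snd '' K := fun y hy => ⟨(x, y), hy, rfl⟩
    exact (lt_of_le_of_lt (measure_mono hsub)
      (hKcomp.image continuous_snd).measure_lt_top).ne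
  have hsliceCfin : ∀ x : ℝ, volume (Prod.mk x ⁻¹' C) ≠ ⊤ := by
    intro x
    have hsub : Prod.mk x ⁻¹' C ⊆ Prod.snd '' C := fun y hy => ⟨(x, y), hy, rfl⟩
    exact (lt_of_le_of_lt (measure_mono hsub)
      (hCcpt.image continuous_snd).measure_lt_top).ne
  have hsliceKm : ∀ x : ℝ, MeasurableSet (Prod.mk x ⁻¹' K) := fun x =>
    hKm.preimage measurable_prodMk_left
  have hsliceCm : ∀ x : ℝ, MeasurableSet (Prod.mk x ⁻¹' C) := fun x =>
    hCm.preimage measurable_prodMk_left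
  have hsm : MeasurableSet (symmDiff K C) := by
    rw [Set.symmDiff_def]
    exact (hKm.diff hCm).union (hCm.diff hKm)
  have hslice_symm : ∀ x : ℝ, Prod.mk x ⁻¹' (symmDiff K C)
      = symmDiff (Prod.mk x ⁻¹' K) (Prod.mk x ⁻¹' C) := by
    intro x
    ext y
    simp [Set.mem_symmDiff]
  have hF : Measurable fun x : ℝ => volume (Prod.mk x ⁻¹' (symmDiff K C)) :=
    measurable_measure_prodMk_left hsm
  have hLHS : volume (symmDiff K C) = ∫⁻ x : ℝ, volume (Prod.mk x ⁻¹' (symmDiff K C)) := by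
    rw [Measure.volume_eq_prod, Measure.prod_apply hsm]
  have hfin : volume (symmDiff K C) ≠ ⊤ :=
    (lt_of_le_of_lt (measure_mono symmDiff_subset_union)
      ((hKcomp.union hCcpt).measure_lt_top)).ne
  have haefin : ∀ᵐ x : ℝ, volume (Prod.mk x ⁻¹' (symmDiff K C)) < ⊤ :=
    ae_lt_top hF (by rw [← hLHS]; exact hfin)
  have hnm1 : ((n - 1 : ℕ) : ℝ) = (n : ℝ) - 1 := by
    push_cast [Nat.cast_sub hn1]
    ring
  have hne1 : (n : ℝ) - 1 ≠ 0 := by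
    have h2n : (2:ℝ) ≤ (n:ℝ) := by exact_mod_cast hn
    linarith
  have hexp1 : (((n:ℝ) - 1)⁻¹ * ((n - 1 : ℕ) : ℝ)) = 1 := by
    rw [hnm1]
    exact inv_mul_cancel₀ hne1
  have hptK : ∀ x : ℝ, g x ^ (n - 1) = (volume (Prod.mk x ⁻¹' K)).toReal := by
    intro x
    rw [hg x, ← Real.rpow_natCast _ (n - 1), ← Real.rpow_mul ENNReal.toReal_nonneg,
      hexp1, Real.rpow_one]
    rfl
  have hptC : ∀ x : ℝ, s x ^ (n - 1) = (volume (Prod.mk x ⁻¹' C)).toReal := by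
    intro x
    rw [hs x, ← Real.rpow_natCast _ (n - 1), ← Real.rpow_mul ENNReal.toReal_nonneg,
      hexp1, Real.rpow_one]
    rfl
  have hpt : ∀ x : ℝ, |g x ^ (n-1) - s x ^ (n-1)|
      = (volume (Prod.mk x ⁻¹' (symmDiff K C))).toReal := by
    intro x
    rw [hptK x, hptC x, hslice_symm x]
    exact (toReal_symmDiff_nested (hsliceKm x) (hsliceCm x) (hsliceKfin x) (hsliceCfin x)
      (hnest x)).symm
  calc (volume (symmDiff K C)).toReal
      = (∫⁻ x : ℝ, volume (Prod.mk x ⁻¹' (symmDiff K C))).toReal := by rw [hLHS]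
    _ = ∫ x : ℝ, (volume (Prod.mk x ⁻¹' (symmDiff K C))).toReal :=
        (integral_toReal hF.aemeasurable haefin).symm
    _ = ∫ x : ℝ, |g x ^ (n-1) - s x ^ (n-1)| :=
        integral_congr_ae (Filter.Eventually.of_forall fun x => (hpt x).symm)
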